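/- arXiv:1511.01636 — 2 statements merged into one kernel-verified Lean document; each statement's English description precedes it below -/
import Mathlib

section
/- Let G be a group, H a normal subgroup of finite index, and V_1, V_2 finite-dimensional representations of H over a field E. Then there is an isomorphism of G-representations: Ind_H^G V_1 ⊗ Ind_H^G V_2 ≅ ⊕_{σ ∈ G/H} Ind_H^G (V_1 ⊗ σ(V_2)), where σ(V_2) denotes the representation of H in which x ∈ H acts by the action of σ^{-1} x σ on V_2. -/
open scoped TensorProduct

variable {E : Type} [Field E] {G : Type} [Group G]

/-- The carrier of the induced representation `Ind_H^G V`: functions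
`f : G → V` with `f(h·g) = ρ(h)(f(g))`. -/
def IndCarrier (H : Subgroup G) {V : Type} [AddCommGroup V] [Module E V]
    (ρ : Representation E H V) : Submodule E (G → V) where
  carrier := {f | ∀ (h : H) (g : G), f ((h : G) * g) = ρ h (f g)}
  add_mem' := by
    intro f₁ f₂ h₁ h₂ h g
    simp [h₁ h g, h₂ h g]
  zero_mem' := by
    intro h g
    simp
  smul_mem' := by
    intro c f hf h g
    simp [hf h g]

/-- The induced representation `Ind_H^G ρ`, with `G` acting by right
translation. -/
noncomputable def IndRep (H : Subgroup G) {V : Type} [AddCommGroup V]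
    [Module E V] (ρ : Representation E H V) :
    Representation E G (IndCarrier (E := E) H ρ) where
  toFun g :=
    { toFun := fun f => ⟨fun x => (f : G → V) (x * g), fun h x => by
        simpa [mul_assoc] using f.2 h (x * g)⟩
      map_add' := fun f₁ f₂ => by ext x; rfl
      map_smul' := fun c f => by ext x; rfl }
  map_one' := by
    apply LinearMap.ext
    intro f
    apply Subtype.ext
    funext x
    simp
  map_mul' := fun g₁ g₂ => by
    apply LinearMap.ext
    intro f
    apply Subtype.ext
    funext x
    simp [mul_assoc]

/-- The conjugate representation `σ(V)`: `x ∈ H` acts through `σ⁻¹ x σ`. -/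
noncomputable def conjRep (H : Subgroup G) [H.Normal] {V : Type}
    [AddCommGroup V] [Module E V] (σ : G) (ρ : Representation E H V) :
    Representation E H V :=
  ρ.comp (MulAut.conjNormal (σ⁻¹ : G)).toMonoidHom

/-- The componentwise representation on a product of representations. -/
noncomputable def piRep {ι : Type} (W : ι → Type) [∀ i, AddCommGroup (W i)]
    [∀ i, Module E (W i)] (ρ : ∀ i, Representation E G (W i)) :
    Representation E G (∀ i, W i) where
  toFun g := LinearMap.pi fun i => (ρ i g).comp (LinearMap.proj i)
  map_one' := by
    apply LinearMap.ext
    intro v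
    funext i
    simp
  map_mul' := fun g₁ g₂ => by
    apply LinearMap.ext
    intro v
    funext i
    simp

namespace IndAux

variable {E : Type} [Field E] {G : Type} [Group G]

theorem mem_of_mk_eq {H : Subgroup G} [hN : H.Normal] {g x : G}
    (h : (g : G ⧸ H) = (x : G ⧸ H)) : g * x⁻¹ ∈ H := by
  have h1 : g⁻¹ * x ∈ H := QuotientGroup.eq.mp h
  have h2 : x⁻¹ * g ∈ H := by simpa using H.inv_mem h1
  have h3 := hN.conj_mem _ h2 x
  simpa [mul_assoc] using h3

variable (H : Subgroup G) [H.Normal]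

theorem mk_coe_mul (h : H) (g : G) : ((↑h * g : G) : G ⧸ H) = (g : G ⧸ H) := by
  rw [QuotientGroup.mk_mul, (QuotientGroup.eq_one_iff _).mpr h.2, one_mul]

/-- The canonical section element `g * (out ⟦g⟧)⁻¹ ∈ H`. -/
noncomputable def sect (g : G) : H :=
  ⟨g * (Quotient.out (g : G ⧸ H))⁻¹, mem_of_mk_eq (by rw [QuotientGroup.out_eq'])⟩

theorem sect_mul (h : H) (g : G) : sect H (↑h * g) = h * sect H g := by
  apply Subtype.ext
  have h1 : (((h : G) : G) : G ⧸ H) = 1 := (QuotientGroup.eq_one_iff _).mpr h.2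
  simp [sect, h1, mul_assoc]

theorem sect_out (s : G ⧸ H) : sect H (Quotient.out s) = 1 := by
  apply Subtype.ext
  simp [sect, QuotientGroup.out_eq']

variable {V : Type} [AddCommGroup V] [Module E V] {ρ : Representation E H V}

theorem indProp (f : IndCarrier (E := E) H ρ) :
    ∀ (h : H) (g : G), (f : G → V) ((h : G) * g) = ρ h ((f : G → V) g) := f.2

theorem sect_spec (f : IndCarrier (E := E) H ρ) (g : G) :
    (f : G → V) g = ρ (sect H g) ((f : G → V) (Quotient.out (g : G ⧸ H))) := by
  have := indProp H f (sect H g) (Quotient.out (g : G ⧸ H))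
  rw [show (↑(sect H g) : G) * Quotient.out (g : G ⧸ H) = g by
    simp [sect, mul_assoc]] at this
  exact this

end IndAux

namespace IndAux

variable {E : Type} [Field E] {G : Type} [Group G]
variable (H : Subgroup G) [H.Normal]
variable {V : Type} [AddCommGroup V] [Module E V]

/-- Evaluation on coset representatives, as a linear equivalence. -/
noncomputable def ev (ρ : Representation E H V) :
    IndCarrier (E := E) H ρ ≃ₗ[E] (G ⧸ H → V) where
  toFun f s := (f : G → V) (Quotient.out s)
  map_add' f₁ f₂ := rfl
  map_smul' c f := rfl
  invFun v := ⟨fun g => ρ (sect H g) (v (g : G ⧸ H)), by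
    intro h g
    beta_reduce
    rw [mk_coe_mul, sect_mul, map_mul]
    rfl⟩
  left_inv f := by
    apply Subtype.ext
    funext g
    exact (sect_spec H f g).symm
  right_inv v := by
    funext s
    show ρ (sect H (Quotient.out s)) (v ((Quotient.out s : G) : G ⧸ H)) = v s
    rw [sect_out, map_one, QuotientGroup.out_eq']
    rfl

open scoped Classical in
/-- Insert `v : V` as the element of `Ind` supported on the coset `t`. -/
noncomputable def jmap (ρ : Representation E H V) (t : G ⧸ H) :
    V →ₗ[E] IndCarrier (E := E) H ρ where
  toFun v := ⟨fun g => if (g : G ⧸ H) = t then ρ (sect H g) v else 0, by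
    intro h g
    beta_reduce
    rw [mk_coe_mul]
    by_cases hc : (g : G ⧸ H) = t
    · simp only [hc, if_pos rfl, sect_mul, map_mul]
      rfl
    · simp only [if_neg hc, map_zero]⟩
  map_add' v₁ v₂ := by
    apply Subtype.ext
    funext g
    by_cases hc : (g : G ⧸ H) = t <;> simp [hc]
  map_smul' c v := by
    apply Subtype.ext
    funext g
    by_cases hc : (g : G ⧸ H) = t <;> simp [hc]

theorem sum_jmap [Fintype (G ⧸ H)] (ρ : Representation E H V)
    (f : IndCarrier (E := E) H ρ) :
    ∑ t : G ⧸ H, jmap H ρ t ((f : G → V) (Quotient.out t)) = f := by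
  classical
  apply Subtype.ext
  funext g
  have hcoe : ((∑ t : G ⧸ H, jmap H ρ t ((f : G → V) (Quotient.out t)) :
      IndCarrier (E := E) H ρ) : G → V) g
      = ∑ t : G ⧸ H, ((jmap H ρ t ((f : G → V) (Quotient.out t)) :
        IndCarrier (E := E) H ρ) : G → V) g := by
    rw [AddSubmonoidClass.coe_finset_sum, Finset.sum_apply]
  rw [hcoe]
  have : ∀ t : G ⧸ H, ((jmap H ρ t ((f : G → V) (Quotient.out t)) :
      IndCarrier (E := E) H ρ) : G → V) g
      = if (g : G ⧸ H) = t then ρ (sect H g) ((f : G → V) (Quotient.out t)) else 0 := by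
    intro t
    simp [jmap]
  simp only [this]
  rw [Finset.sum_ite_eq Finset.univ (g : G ⧸ H), if_pos (Finset.mem_univ _)]
  exact (sect_spec H f g).symm

end IndAux

namespace IndAux

variable {E : Type} [Field E] {G : Type} [Group G]
variable (H : Subgroup G) [H.Normal]
variable {V₁ V₂ : Type} [AddCommGroup V₁] [Module E V₁] [AddCommGroup V₂] [Module E V₂]
variable (ρ₁ : Representation E H V₁) (ρ₂ : Representation E H V₂)

theorem phi_mem (f₁ : IndCarrier (E := E) H ρ₁) (f₂ : IndCarrier (E := E) H ρ₂)
    (s : G ⧸ H) :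
    (fun x => (f₁ : G → V₁) x ⊗ₜ[E] (f₂ : G → V₂) ((Quotient.out s)⁻¹ * x))
      ∈ IndCarrier (E := E) H (ρ₁.tprod (conjRep H (Quotient.out s) ρ₂)) := by
  intro h x
  beta_reduce
  set σ := Quotient.out s with hσ
  have harg : σ⁻¹ * ((h : G) * x) = ↑((MulAut.conjNormal (σ⁻¹ : G)) h) * (σ⁻¹ * x) := by
    rw [MulAut.conjNormal_apply]
    group
  rw [harg, indProp H f₂, indProp H f₁, Representation.tprod_apply, TensorProduct.map_tmul]
  rfl

noncomputable def phi :
    (IndCarrier (E := E) H ρ₁ ⊗[E] IndCarrier (E := E) H ρ₂) →ₗ[E]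
      (∀ s : G ⧸ H,
        IndCarrier (E := E) H (ρ₁.tprod (conjRep H (Quotient.out s) ρ₂))) :=
  TensorProduct.lift
    { toFun := fun f₁ =>
        { toFun := fun f₂ s =>
            ⟨fun x => (f₁ : G → V₁) x ⊗ₜ[E] (f₂ : G → V₂) ((Quotient.out s)⁻¹ * x),
              phi_mem H ρ₁ ρ₂ f₁ f₂ s⟩
          map_add' := fun f₂ f₃ => by
            funext s
            apply Subtype.ext
            funext x
            simp [TensorProduct.tmul_add]
          map_smul' := fun c f₂ => by
            funext s
            apply Subtype.ext
            funext x
            simp }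
      map_add' := fun f₁ f₂ => by
        apply LinearMap.ext
        intro f₃
        funext s
        apply Subtype.ext
        funext x
        simp [TensorProduct.add_tmul]
      map_smul' := fun c f₁ => by
        apply LinearMap.ext
        intro f₃
        funext s
        apply Subtype.ext
        funext x
        simp [TensorProduct.smul_tmul] }

theorem phi_tmul (f₁ : IndCarrier (E := E) H ρ₁) (f₂ : IndCarrier (E := E) H ρ₂)
    (s : G ⧸ H) (x : G) :
    ((phi H ρ₁ ρ₂ (f₁ ⊗ₜ[E] f₂) s : IndCarrier (E := E) H
        (ρ₁.tprod (conjRep H (Quotient.out s) ρ₂))) : G → V₁ ⊗[E] V₂) x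
      = (f₁ : G → V₁) x ⊗ₜ[E] (f₂ : G → V₂) ((Quotient.out s)⁻¹ * x) := rfl

end IndAux

namespace IndAux

variable {E : Type} [Field E] {G : Type} [Group G]
variable (H : Subgroup G) [H.Normal]

theorem mk_out_inv_mul_out (t u : G ⧸ H) :
    (((Quotient.out (t * u⁻¹))⁻¹ * Quotient.out t : G) : G ⧸ H)
      = ((Quotient.out u : G) : G ⧸ H) := by
  rw [QuotientGroup.mk_mul, QuotientGroup.mk_inv, QuotientGroup.out_eq',
    QuotientGroup.out_eq', QuotientGroup.out_eq']
  simp [mul_inv_rev, mul_assoc]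

/-- The element `(out (t·u⁻¹))⁻¹ · out t · (out u)⁻¹ ∈ H`. -/
noncomputable def wElem (t u : G ⧸ H) : H :=
  ⟨((Quotient.out (t * u⁻¹))⁻¹ * Quotient.out t) * (Quotient.out u)⁻¹,
    mem_of_mk_eq (mk_out_inv_mul_out H t u)⟩

variable {V : Type} [AddCommGroup V] [Module E V]

/-- Evaluation at a point, as a linear map out of `IndCarrier`. -/
noncomputable def evalAt (ρ : Representation E H V) (x : G) :
    IndCarrier (E := E) H ρ →ₗ[E] V :=
  (LinearMap.proj x).comp (IndCarrier (E := E) H ρ).subtype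

variable {V₁ V₂ : Type} [AddCommGroup V₁] [Module E V₁] [AddCommGroup V₂] [Module E V₂]
variable (ρ₁ : Representation E H V₁) (ρ₂ : Representation E H V₂)

noncomputable def chi [Fintype (G ⧸ H)] :
    (∀ s : G ⧸ H,
        IndCarrier (E := E) H (ρ₁.tprod (conjRep H (Quotient.out s) ρ₂))) →ₗ[E]
      (IndCarrier (E := E) H ρ₁ ⊗[E] IndCarrier (E := E) H ρ₂) :=
  ∑ t : G ⧸ H, ∑ u : G ⧸ H,
    (TensorProduct.map (jmap H ρ₁ t) (jmap H ρ₂ u)).comp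
      ((LinearMap.lTensor V₁ (ρ₂ ((wElem H t u)⁻¹))).comp
        ((evalAt H (ρ₁.tprod (conjRep H (Quotient.out (t * u⁻¹)) ρ₂))
            (Quotient.out t)).comp
          (LinearMap.proj (t * u⁻¹))))

theorem chi_phi_tmul [Fintype (G ⧸ H)] (f₁ : IndCarrier (E := E) H ρ₁)
    (f₂ : IndCarrier (E := E) H ρ₂) :
    chi H ρ₁ ρ₂ (phi H ρ₁ ρ₂ (f₁ ⊗ₜ[E] f₂)) = f₁ ⊗ₜ[E] f₂ := by
  have key : ∀ t u : G ⧸ H,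
      (ρ₂ ((wElem H t u)⁻¹)) ((f₂ : G → V₂) ((Quotient.out (t * u⁻¹))⁻¹ * Quotient.out t))
        = (f₂ : G → V₂) (Quotient.out u) := by
    intro t u
    have harg : (Quotient.out (t * u⁻¹))⁻¹ * Quotient.out t
        = ((wElem H t u : H) : G) * Quotient.out u := by
      simp [wElem, mul_assoc]
    rw [harg, indProp H f₂, ← LinearMap.comp_apply, ← Module.End.mul_eq_comp, ← map_mul,
      inv_mul_cancel, map_one, Module.End.one_apply]
  have step : ∀ t u : G ⧸ H,
      ((TensorProduct.map (jmap H ρ₁ t) (jmap H ρ₂ u)).comp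
      ((LinearMap.lTensor V₁ (ρ₂ ((wElem H t u)⁻¹))).comp
        ((evalAt H (ρ₁.tprod (conjRep H (Quotient.out (t * u⁻¹)) ρ₂))
            (Quotient.out t)).comp
          (LinearMap.proj (t * u⁻¹))))) (phi H ρ₁ ρ₂ (f₁ ⊗ₜ[E] f₂))
        = jmap H ρ₁ t ((f₁ : G → V₁) (Quotient.out t))
            ⊗ₜ[E] jmap H ρ₂ u ((f₂ : G → V₂) (Quotient.out u)) := by
    intro t u
    simp only [LinearMap.comp_apply, LinearMap.proj_apply]
    have hev : (evalAt H (ρ₁.tprod (conjRep H (Quotient.out (t * u⁻¹)) ρ₂))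
        (Quotient.out t)) (phi H ρ₁ ρ₂ (f₁ ⊗ₜ[E] f₂) (t * u⁻¹))
        = (f₁ : G → V₁) (Quotient.out t)
            ⊗ₜ[E] (f₂ : G → V₂) ((Quotient.out (t * u⁻¹))⁻¹ * Quotient.out t) := rfl
    rw [hev, LinearMap.lTensor_tmul, key, TensorProduct.map_tmul]
  have hchi : chi H ρ₁ ρ₂ (phi H ρ₁ ρ₂ (f₁ ⊗ₜ[E] f₂))
      = ∑ t : G ⧸ H, ∑ u : G ⧸ H,
          jmap H ρ₁ t ((f₁ : G → V₁) (Quotient.out t))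
            ⊗ₜ[E] jmap H ρ₂ u ((f₂ : G → V₂) (Quotient.out u)) := by
    rw [chi]
    rw [LinearMap.sum_apply]
    refine Finset.sum_congr rfl fun t _ => ?_
    rw [LinearMap.sum_apply]
    exact Finset.sum_congr rfl fun u _ => step t u
  rw [hchi]
  have : ∀ t : G ⧸ H, ∑ u : G ⧸ H,
      jmap H ρ₁ t ((f₁ : G → V₁) (Quotient.out t))
        ⊗ₜ[E] jmap H ρ₂ u ((f₂ : G → V₂) (Quotient.out u))
      = jmap H ρ₁ t ((f₁ : G → V₁) (Quotient.out t)) ⊗ₜ[E] (f₂ : IndCarrier (E := E) H ρ₂) := by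
    intro t
    rw [← TensorProduct.tmul_sum, sum_jmap]
  simp only [this]
  rw [← TensorProduct.sum_tmul, sum_jmap]

end IndAux

namespace IndAux

variable {E : Type} [Field E] {G : Type} [Group G]
variable (H : Subgroup G) [H.Normal]
variable {V : Type} [AddCommGroup V] [Module E V]

theorem fd_ind [Finite (G ⧸ H)] (ρ : Representation E H V) [FiniteDimensional E V] :
    FiniteDimensional E (IndCarrier (E := E) H ρ) :=
  Module.Finite.equiv (ev H ρ).symm

theorem finrank_ind [Fintype (G ⧸ H)] (ρ : Representation E H V) [FiniteDimensional E V] :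
    Module.finrank E (IndCarrier (E := E) H ρ)
      = Fintype.card (G ⧸ H) * Module.finrank E V := by
  rw [(ev H ρ).finrank_eq, Module.finrank_pi_fintype, Finset.sum_const, smul_eq_mul,
    Finset.card_univ]

end IndAux

namespace IndAux

variable {E : Type} [Field E] {G : Type} [Group G]
variable (H : Subgroup G) [H.Normal]
variable {V₁ V₂ : Type} [AddCommGroup V₁] [Module E V₁] [AddCommGroup V₂] [Module E V₂]
variable (ρ₁ : Representation E H V₁) (ρ₂ : Representation E H V₂)

theorem phi_equivariant (g : G) (f₁ : IndCarrier (E := E) H ρ₁)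
    (f₂ : IndCarrier (E := E) H ρ₂) :
    phi H ρ₁ ρ₂ (((IndRep H ρ₁).tprod (IndRep H ρ₂)) g (f₁ ⊗ₜ[E] f₂))
      = (piRep _ (fun s : G ⧸ H =>
          IndRep H (ρ₁.tprod (conjRep H (Quotient.out s) ρ₂)))) g
            (phi H ρ₁ ρ₂ (f₁ ⊗ₜ[E] f₂)) := by
  rw [Representation.tprod_apply, TensorProduct.map_tmul]
  funext s
  apply Subtype.ext
  funext x
  show (f₁ : G → V₁) (x * g) ⊗ₜ[E] (f₂ : G → V₂) ((Quotient.out s)⁻¹ * x * g)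
      = (f₁ : G → V₁) (x * g) ⊗ₜ[E] (f₂ : G → V₂) ((Quotient.out s)⁻¹ * (x * g))
  rw [mul_assoc]

end IndAux

/-- Mackey-type formula for a tensor product of two induced representations:
`Ind_H^G V₁ ⊗ Ind_H^G V₂ ≅ ⊕_{σ ∈ G/H} Ind_H^G (V₁ ⊗ σ(V₂))` as
representations of `G`. -/
theorem ind_tensor_ind_iso (H : Subgroup G) [H.Normal] [H.FiniteIndex]
    {V₁ V₂ : Type} [AddCommGroup V₁] [Module E V₁] [AddCommGroup V₂]
    [Module E V₂] [FiniteDimensional E V₁] [FiniteDimensional E V₂]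
    (ρ₁ : Representation E H V₁) (ρ₂ : Representation E H V₂) :
    ∃ e : (IndCarrier (E := E) H ρ₁ ⊗[E] IndCarrier (E := E) H ρ₂) ≃ₗ[E]
        (∀ s : G ⧸ H,
          IndCarrier (E := E) H (ρ₁.tprod (conjRep H (Quotient.out s) ρ₂))),
      ∀ (g : G) (v),
        e (((IndRep H ρ₁).tprod (IndRep H ρ₂)) g v) =
          (piRep _ (fun s : G ⧸ H =>
            IndRep H (ρ₁.tprod (conjRep H (Quotient.out s) ρ₂)))) g (e v) := by
  classical
  haveI : Fintype (G ⧸ H) := Fintype.ofFinite _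
  haveI : FiniteDimensional E (IndCarrier (E := E) H ρ₁) := IndAux.fd_ind H ρ₁
  haveI : FiniteDimensional E (IndCarrier (E := E) H ρ₂) := IndAux.fd_ind H ρ₂
  haveI : ∀ s : G ⧸ H, FiniteDimensional E (IndCarrier (E := E) H
      (ρ₁.tprod (conjRep H (Quotient.out s) ρ₂))) := fun s => IndAux.fd_ind H _
  have hcomp : (IndAux.chi H ρ₁ ρ₂).comp (IndAux.phi H ρ₁ ρ₂) = LinearMap.id :=
    TensorProduct.ext' fun f₁ f₂ => IndAux.chi_phi_tmul H ρ₁ ρ₂ f₁ f₂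
  have hinj : Function.Injective ⇑(IndAux.phi H ρ₁ ρ₂) :=
    Function.LeftInverse.injective (g := ⇑(IndAux.chi H ρ₁ ρ₂))
      fun a => DFunLike.congr_fun hcomp a
  have hrank : Module.finrank E
        (IndCarrier (E := E) H ρ₁ ⊗[E] IndCarrier (E := E) H ρ₂)
      = Module.finrank E (∀ s : G ⧸ H,
          IndCarrier (E := E) H (ρ₁.tprod (conjRep H (Quotient.out s) ρ₂))) := by
    rw [Module.finrank_tensorProduct, Module.finrank_pi_fintype,
      IndAux.finrank_ind, IndAux.finrank_ind]
    have hs : ∀ s : G ⧸ H, Module.finrank E (IndCarrier (E := E) H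
          (ρ₁.tprod (conjRep H (Quotient.out s) ρ₂)))
        = Fintype.card (G ⧸ H) * (Module.finrank E V₁ * Module.finrank E V₂) :=
      fun s => by rw [IndAux.finrank_ind, Module.finrank_tensorProduct]
    simp only [hs]
    rw [Finset.sum_const, smul_eq_mul, Finset.card_univ]
    ring
  refine ⟨LinearMap.linearEquivOfInjective (K := E)
    (V := IndCarrier (E := E) H ρ₁ ⊗[E] IndCarrier (E := E) H ρ₂)
    (V₂ := ∀ s : G ⧸ H, IndCarrier (E := E) H (ρ₁.tprod (conjRep H (Quotient.out s) ρ₂)))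
    (IndAux.phi H ρ₁ ρ₂) hinj hrank, fun g v => ?_⟩
  rw [LinearMap.linearEquivOfInjective_apply, LinearMap.linearEquivOfInjective_apply]
  induction v using TensorProduct.induction_on with
  | zero => simp
  | tmul f₁ f₂ => exact IndAux.phi_equivariant H ρ₁ ρ₂ g f₁ f₂
  | add x y hx hy => simp only [map_add, hx, hy]
end

section
/- Let k ≥ 2 and let μ_k ⊂ ℂ be the group of k-th roots of unity. Let T_k be the multiset of all sums ζ_1 + ζ_2 − ζ_3 − ζ_4 with ζ_1, ζ_2, ζ_3, ζ_4 ∈ μ_k. Then the group of complex numbers μ with μ·T_k = T_k (as multisets) equals μ_k if k is even, and equals μ_{2k} if k is odd. -/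
/-- The multiset `T_k` of all sums `ζ₁ + ζ₂ − ζ₃ − ζ₄` with `ζᵢ` ranging over
the `k`-th roots of unity in `ℂ`. -/
noncomputable def Tk (k : ℕ) : Multiset ℂ :=
  Multiset.map (fun p => p.1.1 + p.1.2 - p.2.1 - p.2.2)
    (Multiset.product
      (Multiset.product (Polynomial.nthRoots k (1 : ℂ))
        (Polynomial.nthRoots k (1 : ℂ)))
      (Multiset.product (Polynomial.nthRoots k (1 : ℂ))
        (Polynomial.nthRoots k (1 : ℂ))))

open Finset Polynomial

namespace TkAux

/-! ### Multiset product helper lemmas -/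

lemma map_product {α β γ δ : Type*} (f : α → γ) (g : β → δ) (s : Multiset α) (t : Multiset β) :
    (Multiset.product s t).map (Prod.map f g) =
      Multiset.product (s.map f) (t.map g) := by
  show ((s ×ˢ t).map (Prod.map f g)) = (s.map f) ×ˢ (t.map g)
  induction s using Multiset.induction with
  | empty => simp
  | cons a s ih =>
      have hfn : (fun x => Prod.map f g x) ∘ Prod.mk a = Prod.mk (f a) ∘ g := by
        funext b; rfl
      simp only [Multiset.cons_product, Multiset.map_add, Multiset.map_cons, Multiset.map_map,
        ih, hfn]

lemma map_swap {α β : Type*} (s : Multiset α) (t : Multiset β) :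
    (Multiset.product s t).map Prod.swap = Multiset.product t s := by
  show ((s ×ˢ t).map Prod.swap) = t ×ˢ s
  induction s using Multiset.induction with
  | empty => simp
  | cons a s ih =>
      simp only [Multiset.cons_product, Multiset.map_add, Multiset.map_map, ih,
        Multiset.product_cons]
      have hfn : Prod.swap ∘ (Prod.mk a : β → α × β) = fun b => (b, a) := by funext b; rfl
      rw [hfn, add_comm]

lemma msum_product' {α β : Type*} (s : Multiset α) (t : Multiset β) (f : α × β → ℂ) :
    ((Multiset.product s t).map f).sum =
      (s.map fun a => ((t.map fun b => f (a, b)).sum)).sum := by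
  show ((s ×ˢ t).map f).sum = _
  induction s using Multiset.induction with
  | empty => simp
  | cons a s ih =>
      simp [Multiset.cons_product, Multiset.map_map, ih, Function.comp_def]

/-! ### Rotation and negation symmetries of `Tk` -/

lemma map_rot_nthRoots {k : ℕ} (hk : k ≠ 0) {ζ : ℂ} (hζ : IsPrimitiveRoot ζ k)
    {ν : ℂ} (hν : ν ^ k = 1) :
    (nthRoots k (1 : ℂ)).map (fun z => ν * z) = nthRoots k (1 : ℂ) := by
  have hν0 : ν ≠ 0 := by
    intro h
    rw [h, zero_pow hk] at hν
    exact zero_ne_one hν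
  have hnd : (nthRoots k (1 : ℂ)).Nodup := hζ.nthRoots_one_nodup
  have hle : (nthRoots k (1 : ℂ)).map (fun z => ν * z) ≤ nthRoots k (1 : ℂ) := by
    rw [Multiset.le_iff_subset (hnd.map (mul_right_injective₀ hν0))]
    intro x hx
    rw [Multiset.mem_map] at hx
    obtain ⟨y, hy, rfl⟩ := hx
    rw [mem_nthRoots (Nat.pos_of_ne_zero hk)] at hy ⊢
    rw [mul_pow, hν, hy, one_mul]
  refine Multiset.eq_of_le_of_card_le hle ?_
  simp

lemma map_rot_Tk {k : ℕ} (hk : k ≠ 0) {ζ : ℂ} (hζ : IsPrimitiveRoot ζ k)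
    {ν : ℂ} (hν : ν ^ k = 1) :
    (Tk k).map (fun z => ν * z) = Tk k := by
  unfold Tk
  rw [Multiset.map_map]
  set R := nthRoots k (1 : ℂ)
  have key : ((fun z => ν * z) ∘ fun p : (ℂ × ℂ) × ℂ × ℂ => p.1.1 + p.1.2 - p.2.1 - p.2.2)
      = (fun p : (ℂ × ℂ) × ℂ × ℂ => p.1.1 + p.1.2 - p.2.1 - p.2.2) ∘
        Prod.map (Prod.map (fun z => ν * z) (fun z => ν * z))
          (Prod.map (fun z => ν * z) (fun z => ν * z)) := by
    funext p
    simp [Prod.map]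
    ring
  rw [key, ← Multiset.map_map, map_product, map_product,
    map_rot_nthRoots hk hζ hν]

lemma map_neg_Tk {k : ℕ} :
    (Tk k).map (fun z => -z) = Tk k := by
  unfold Tk
  rw [Multiset.map_map]
  have key : ((fun z => -z) ∘ fun p : (ℂ × ℂ) × ℂ × ℂ => p.1.1 + p.1.2 - p.2.1 - p.2.2)
      = (fun p : (ℂ × ℂ) × ℂ × ℂ => p.1.1 + p.1.2 - p.2.1 - p.2.2) ∘ Prod.swap := by
    funext p
    simp [Prod.swap]
    ring
  rw [key, ← Multiset.map_map, map_swap]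

/-! ### Power sums -/

noncomputable def ps (ζ : ℂ) (k a : ℕ) : ℂ := ∑ j ∈ Finset.range k, (ζ ^ j) ^ a

noncomputable def q (ζ : ℂ) (k m : ℕ) : ℂ :=
  ∑ j1 ∈ Finset.range k, ∑ j2 ∈ Finset.range k, (ζ ^ j1 + ζ ^ j2) ^ m

noncomputable def P (ζ : ℂ) (k n : ℕ) : ℂ :=
  ∑ j1 ∈ Finset.range k, ∑ j2 ∈ Finset.range k, ∑ j3 ∈ Finset.range k, ∑ j4 ∈ Finset.range k,
    (ζ ^ j1 + ζ ^ j2 - ζ ^ j3 - ζ ^ j4) ^ n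

lemma ps_eq {k : ℕ} (hk : k ≠ 0) {ζ : ℂ} (hζ : IsPrimitiveRoot ζ k) (a : ℕ) :
    ps ζ k a = if k ∣ a then (k : ℂ) else 0 := by
  clear hk
  unfold ps
  simp_rw [← pow_mul, mul_comm, pow_mul]
  by_cases h : k ∣ a
  · rw [if_pos h, (hζ.pow_eq_one_iff_dvd a).2 h]
    simp
  · have h1 : ζ ^ a ≠ 1 := fun hh => h ((hζ.pow_eq_one_iff_dvd a).1 hh)
    rw [if_neg h, geom_sum_eq h1]
    have h2 : (ζ ^ a) ^ k = 1 := by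
      rw [← pow_mul, mul_comm, pow_mul, hζ.pow_eq_one, one_pow]
    rw [h2]
    simp

/-- Generic double binomial sum. -/
lemma sum_add_pow {ι κ : Type*} (S : Finset ι) (T : Finset κ) (f : ι → ℂ) (g : κ → ℂ) (n : ℕ) :
    (∑ a ∈ S, ∑ b ∈ T, (f a + g b) ^ n) =
      ∑ i ∈ Finset.range (n + 1),
        (n.choose i : ℂ) * (∑ a ∈ S, f a ^ i) * (∑ b ∈ T, g b ^ (n - i)) := by
  simp_rw [add_pow]
  calc (∑ a ∈ S, ∑ b ∈ T, ∑ i ∈ Finset.range (n+1),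
      f a ^ i * g b ^ (n - i) * (n.choose i : ℂ))
      = ∑ a ∈ S, ∑ i ∈ Finset.range (n+1), ∑ b ∈ T,
        f a ^ i * g b ^ (n - i) * (n.choose i : ℂ) :=
        Finset.sum_congr rfl fun a _ => Finset.sum_comm
    _ = ∑ i ∈ Finset.range (n+1), ∑ a ∈ S, ∑ b ∈ T,
        f a ^ i * g b ^ (n - i) * (n.choose i : ℂ) := Finset.sum_comm
    _ = ∑ i ∈ Finset.range (n + 1),
        (n.choose i : ℂ) * (∑ a ∈ S, f a ^ i) * (∑ b ∈ T, g b ^ (n - i)) := by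
        refine Finset.sum_congr rfl fun i _ => ?_
        rw [mul_assoc, Finset.sum_mul_sum, Finset.mul_sum]
        simp_rw [Finset.mul_sum]
        refine Finset.sum_congr rfl fun a _ => Finset.sum_congr rfl fun b _ => by ring

lemma q_eq (k : ℕ) (ζ : ℂ) (m : ℕ) :
    q ζ k m = ∑ i ∈ Finset.range (m + 1),
      (m.choose i : ℂ) * ps ζ k i * ps ζ k (m - i) := by
  unfold q ps
  exact sum_add_pow (Finset.range k) (Finset.range k) (fun j => ζ ^ j) (fun j => ζ ^ j) m

lemma P_eq (k : ℕ) (ζ : ℂ) (n : ℕ) :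
    P ζ k n = ∑ i ∈ Finset.range (n + 1),
      (n.choose i : ℂ) * q ζ k i * ((-1) ^ (n - i) * q ζ k (n - i)) := by
  set B := (Finset.range k) ×ˢ (Finset.range k) with hB
  have key := sum_add_pow B B
    (fun a : ℕ × ℕ => ζ ^ a.1 + ζ ^ a.2) (fun b : ℕ × ℕ => -(ζ ^ b.1 + ζ ^ b.2)) n
  have h1 : ∀ i : ℕ, (∑ a ∈ B, (ζ ^ a.1 + ζ ^ a.2) ^ i) = q ζ k i := by
    intro i
    unfold q
    rw [hB, Finset.sum_product]
  have h2 : ∀ i : ℕ, (∑ b ∈ B, (-(ζ ^ b.1 + ζ ^ b.2)) ^ i) = (-1 : ℂ) ^ i * q ζ k i := by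
    intro i
    have hterm : ∀ b : ℕ × ℕ, (-(ζ ^ b.1 + ζ ^ b.2)) ^ i
        = (-1 : ℂ) ^ i * (ζ ^ b.1 + ζ ^ b.2) ^ i := fun b => neg_pow _ _
    rw [Finset.sum_congr rfl fun b _ => hterm b, ← Finset.mul_sum, h1]
  calc P ζ k n
      = ∑ a ∈ B, ∑ b ∈ B, ((ζ ^ a.1 + ζ ^ a.2) + -(ζ ^ b.1 + ζ ^ b.2)) ^ n := by
        unfold P
        rw [hB]
        simp_rw [Finset.sum_product, sub_sub, sub_eq_add_neg]
    _ = ∑ i ∈ Finset.range (n + 1),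
        (n.choose i : ℂ) * q ζ k i * ((-1) ^ (n - i) * q ζ k (n - i)) := by
        rw [key]
        exact Finset.sum_congr rfl fun i _ => by rw [h1, h2]

lemma range_msum (k : ℕ) (f : ℕ → ℂ) :
    ((Multiset.range k).map f).sum = ∑ j ∈ Finset.range k, f j := by
  rw [Finset.sum_eq_multiset_sum, Finset.range_val]

lemma Tk_sum_pow {k : ℕ} (hk : k ≠ 0) {ζ : ℂ} (hζ : IsPrimitiveRoot ζ k) (n : ℕ) :
    ((Tk k).map (fun z => z ^ n)).sum = P ζ k n := by
  clear hk
  have hS : nthRoots k (1 : ℂ) = (Multiset.range k).map (ζ ^ ·) := by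
    have := hζ.nthRoots_eq (one_pow k)
    simpa using this
  rw [Tk, hS, Multiset.map_map]
  simp only [msum_product', Multiset.map_map, Function.comp_def, range_msum]
  rfl

/-! ### Evaluation of the power sums -/

lemma q_zero {k : ℕ} (hk : k ≠ 0) {ζ : ℂ} (hζ : IsPrimitiveRoot ζ k) {m : ℕ}
    (hm : ¬ k ∣ m) : q ζ k m = 0 := by
  rw [q_eq]
  apply Finset.sum_eq_zero
  intro i hi
  rw [Finset.mem_range] at hi
  by_cases h : k ∣ i
  · have him : i ≤ m := Nat.lt_succ_iff.mp hi
    have h2 : ¬ k ∣ (m - i) := by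
      intro hd
      apply hm
      have h3 := Nat.dvd_add h hd
      rwa [Nat.add_sub_cancel' him] at h3
    rw [ps_eq hk hζ (m - i), if_neg h2, mul_zero]
  · rw [ps_eq hk hζ i, if_neg h, mul_zero, zero_mul]

lemma q_zero_eval {k : ℕ} (hk : k ≠ 0) {ζ : ℂ} (hζ : IsPrimitiveRoot ζ k) :
    q ζ k 0 = (k : ℂ) ^ 2 := by
  rw [q_eq, Finset.sum_range_one, ps_eq hk hζ 0, if_pos (dvd_zero k)]
  simp
  ring

lemma q_k_eval {k : ℕ} (hk : k ≠ 0) {ζ : ℂ} (hζ : IsPrimitiveRoot ζ k) :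
    q ζ k k = 2 * (k : ℂ) ^ 2 := by
  rw [q_eq]
  have hsub : ({0, k} : Finset ℕ) ⊆ Finset.range (k + 1) := by
    intro x hx
    simp only [Finset.mem_insert, Finset.mem_singleton] at hx
    rcases hx with rfl | rfl <;> simp [Nat.lt_succ_iff]
  have hvanish : ∀ x ∈ Finset.range (k + 1), x ∉ ({0, k} : Finset ℕ) →
      (k.choose x : ℂ) * ps ζ k x * ps ζ k (k - x) = 0 := by
    intro x hx hx'
    simp only [Finset.mem_insert, Finset.mem_singleton, not_or] at hx'
    rw [Finset.mem_range, Nat.lt_succ_iff] at hx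
    have hnd : ¬ k ∣ x := by
      intro hd
      rcases Nat.eq_zero_or_pos x with h0 | h0
      · exact hx'.1 h0
      · exact hx'.2 (le_antisymm hx (Nat.le_of_dvd h0 hd))
    rw [ps_eq hk hζ x, if_neg hnd, mul_zero, zero_mul]
  rw [← Finset.sum_subset hsub hvanish, Finset.sum_pair (by omega : (0 : ℕ) ≠ k)]
  rw [Nat.sub_zero, Nat.sub_self, ps_eq hk hζ 0, ps_eq hk hζ k, if_pos (dvd_zero k),
    if_pos dvd_rfl, Nat.choose_zero_right, Nat.choose_self]
  push_cast
  ring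

lemma q_2k_eval {k : ℕ} (hk : k ≠ 0) {ζ : ℂ} (hζ : IsPrimitiveRoot ζ k) :
    q ζ k (2 * k) = (2 + ((2 * k).choose k : ℂ)) * (k : ℂ) ^ 2 := by
  rw [q_eq]
  have hsub : ({0, k, 2 * k} : Finset ℕ) ⊆ Finset.range (2 * k + 1) := by
    intro x hx
    simp only [Finset.mem_insert, Finset.mem_singleton] at hx
    rcases hx with rfl | rfl | rfl <;> simp [Nat.lt_succ_iff] <;> omega
  have hvanish : ∀ x ∈ Finset.range (2 * k + 1), x ∉ ({0, k, 2 * k} : Finset ℕ) →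
      ((2 * k).choose x : ℂ) * ps ζ k x * ps ζ k (2 * k - x) = 0 := by
    intro x hx hx'
    simp only [Finset.mem_insert, Finset.mem_singleton, not_or] at hx'
    rw [Finset.mem_range, Nat.lt_succ_iff] at hx
    have hnd : ¬ k ∣ x := by
      rintro ⟨c, rfl⟩
      have hc : c ≤ 2 := by
        by_contra hcc
        push_neg at hcc
        have h3c : 3 * k ≤ k * c := by
          calc 3 * k = k * 3 := by ring
          _ ≤ k * c := Nat.mul_le_mul_left k hcc
        have h3 : 3 * k ≤ 2 * k := le_trans h3c hx
        omega
      interval_cases c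
      · exact hx'.1 (by ring)
      · exact hx'.2.1 (by ring)
      · exact hx'.2.2 (by ring)
    rw [ps_eq hk hζ x, if_neg hnd, mul_zero, zero_mul]
  have h0k : (0 : ℕ) ∉ ({k, 2 * k} : Finset ℕ) := by
    simp only [Finset.mem_insert, Finset.mem_singleton]
    omega
  rw [← Finset.sum_subset hsub hvanish, Finset.sum_insert h0k,
    Finset.sum_pair (by omega : k ≠ 2 * k)]
  rw [Nat.sub_zero, Nat.sub_self, show 2 * k - k = k by omega]
  rw [ps_eq hk hζ 0, ps_eq hk hζ k, ps_eq hk hζ (2 * k)]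
  rw [if_pos (dvd_zero k), if_pos dvd_rfl, if_pos (dvd_mul_left k 2),
    Nat.choose_zero_right, Nat.choose_self]
  push_cast
  ring

lemma P_k_eval {k : ℕ} (hk : k ≠ 0) (hke : Even k) {ζ : ℂ} (hζ : IsPrimitiveRoot ζ k) :
    P ζ k k = 4 * (k : ℂ) ^ 4 := by
  rw [P_eq]
  have hsub : ({0, k} : Finset ℕ) ⊆ Finset.range (k + 1) := by
    intro x hx
    simp only [Finset.mem_insert, Finset.mem_singleton] at hx
    rcases hx with rfl | rfl <;> simp [Nat.lt_succ_iff]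
  have hvanish : ∀ x ∈ Finset.range (k + 1), x ∉ ({0, k} : Finset ℕ) →
      (k.choose x : ℂ) * q ζ k x * ((-1) ^ (k - x) * q ζ k (k - x)) = 0 := by
    intro x hx hx'
    simp only [Finset.mem_insert, Finset.mem_singleton, not_or] at hx'
    rw [Finset.mem_range, Nat.lt_succ_iff] at hx
    have hnd : ¬ k ∣ x := by
      intro hd
      rcases Nat.eq_zero_or_pos x with h0 | h0
      · exact hx'.1 h0
      · exact hx'.2 (le_antisymm hx (Nat.le_of_dvd h0 hd))
    rw [q_zero hk hζ hnd, mul_zero, zero_mul]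
  rw [← Finset.sum_subset hsub hvanish, Finset.sum_pair (by omega : (0 : ℕ) ≠ k)]
  rw [Nat.sub_zero, Nat.sub_self, q_zero_eval hk hζ, q_k_eval hk hζ, hke.neg_one_pow]
  simp
  ring

lemma P_2k_eval {k : ℕ} (hk : k ≠ 0) (hko : Odd k) {ζ : ℂ} (hζ : IsPrimitiveRoot ζ k) :
    P ζ k (2 * k) = (4 - 2 * ((2 * k).choose k : ℂ)) * (k : ℂ) ^ 4 := by
  rw [P_eq]
  have hsub : ({0, k, 2 * k} : Finset ℕ) ⊆ Finset.range (2 * k + 1) := by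
    intro x hx
    simp only [Finset.mem_insert, Finset.mem_singleton] at hx
    rcases hx with rfl | rfl | rfl <;> simp [Nat.lt_succ_iff] <;> omega
  have hvanish : ∀ x ∈ Finset.range (2 * k + 1), x ∉ ({0, k, 2 * k} : Finset ℕ) →
      ((2 * k).choose x : ℂ) * q ζ k x * ((-1) ^ (2 * k - x) * q ζ k (2 * k - x)) = 0 := by
    intro x hx hx'
    simp only [Finset.mem_insert, Finset.mem_singleton, not_or] at hx'
    rw [Finset.mem_range, Nat.lt_succ_iff] at hx
    have hnd : ¬ k ∣ x := by
      rintro ⟨c, rfl⟩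
      have hc : c ≤ 2 := by
        by_contra hcc
        push_neg at hcc
        have h3c : 3 * k ≤ k * c := by
          calc 3 * k = k * 3 := by ring
          _ ≤ k * c := Nat.mul_le_mul_left k hcc
        have h3 : 3 * k ≤ 2 * k := le_trans h3c hx
        omega
      interval_cases c
      · exact hx'.1 (by ring)
      · exact hx'.2.1 (by ring)
      · exact hx'.2.2 (by ring)
    rw [q_zero hk hζ hnd, mul_zero, zero_mul]
  have h0k : (0 : ℕ) ∉ ({k, 2 * k} : Finset ℕ) := by
    simp only [Finset.mem_insert, Finset.mem_singleton]
    omega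
  rw [← Finset.sum_subset hsub hvanish, Finset.sum_insert h0k,
    Finset.sum_pair (by omega : k ≠ 2 * k)]
  have e1 : 2 * k - 0 = 2 * k := Nat.sub_zero _
  have e2 : 2 * k - k = k := by omega
  have e3 : 2 * k - 2 * k = 0 := Nat.sub_self _
  rw [e1, e2, e3]
  rw [q_zero_eval hk hζ, q_k_eval hk hζ, q_2k_eval hk hζ]
  have s1 : ((-1 : ℂ)) ^ (2 * k) = 1 := (even_two_mul k).neg_one_pow
  have s2 : ((-1 : ℂ)) ^ k = -1 := hko.neg_one_pow
  rw [s1, s2]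
  simp
  ring

end TkAux

open TkAux

/-- The group of `μ ∈ ℂ` with `μ·T_k = T_k` (as multisets) equals `μ_k` if `k`
is even and `μ_{2k}` if `k` is odd. -/
theorem symmetry_group_of_Tk (k : ℕ) (hk : 2 ≤ k) (μ : ℂ) :
    (Tk k).map (fun z => μ * z) = Tk k ↔
      μ ^ (if Even k then k else 2 * k) = 1 := by
  have hk0 : k ≠ 0 := by omega
  have hζ : IsPrimitiveRoot (Complex.exp (2 * Real.pi * Complex.I / k)) k :=
    Complex.isPrimitiveRoot_exp k hk0
  set ζ := Complex.exp (2 * Real.pi * Complex.I / k) with hζdef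
  constructor
  · intro h
    set n := if Even k then k else 2 * k with hn
    have hkC : (k : ℂ) ≠ 0 := Nat.cast_ne_zero.2 hk0
    have hP : P ζ k n ≠ 0 := by
      by_cases hke : Even k
      · rw [hn, if_pos hke, P_k_eval hk0 hke hζ]
        exact mul_ne_zero (by norm_num) (pow_ne_zero _ hkC)
      · have hko : Odd k := Nat.not_even_iff_odd.1 hke
        rw [hn, if_neg hke, P_2k_eval hk0 hko hζ]
        refine mul_ne_zero ?_ (pow_ne_zero _ hkC)
        have hC : 4 ≤ (2 * k).choose k := by
          have h1 : (2 * k).choose 1 ≤ (2 * k).choose ((2 * k) / 2) :=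
            Nat.choose_le_middle 1 (2 * k)
          rw [Nat.choose_one_right, Nat.mul_div_cancel_left k (by norm_num : 0 < 2)] at h1
          omega
        intro h0
        have h4 : ((2 * k).choose k : ℂ) = 2 := by
          have := sub_eq_zero.mp h0
          linear_combination -(1/2 : ℂ) * this
        have h5 : (2 * k).choose k = 2 := by exact_mod_cast h4
        omega
    have hps : μ ^ n * P ζ k n = P ζ k n := by
      have h2 := congrArg (fun T : Multiset ℂ => (T.map (fun z => z ^ n)).sum) h
      rw [Multiset.map_map] at h2
      have hfun : ((fun z : ℂ => z ^ n) ∘ fun z => μ * z) = fun z => μ ^ n * z ^ n := by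
        funext z
        simp [mul_pow]
      rw [hfun, Multiset.sum_map_mul_left, Tk_sum_pow hk0 hζ n] at h2
      exact h2
    have := mul_right_cancel₀ hP (hps.trans (one_mul (P ζ k n)).symm)
    exact this
  · intro h
    by_cases hke : Even k
    · rw [if_pos hke] at h
      exact map_rot_Tk hk0 hζ h
    · rw [if_neg hke] at h
      have hko : Odd k := Nat.not_even_iff_odd.1 hke
      have h2 : (μ ^ k) * (μ ^ k) = 1 := by
        rw [← pow_add, show k + k = 2 * k by ring]
        exact h
      rcases mul_self_eq_one_iff.1 h2 with h1 | h1
      · exact map_rot_Tk hk0 hζ h1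
      · have hneg : (-μ) ^ k = 1 := by
          rw [hko.neg_pow, h1, neg_neg]
        have hsplit : (Tk k).map (fun z => μ * z)
            = ((Tk k).map (fun z => (-μ) * z)).map (fun z => -z) := by
          rw [Multiset.map_map]
          apply Multiset.map_congr rfl
          intro x _
          simp
        rw [hsplit, map_rot_Tk hk0 hζ hneg, map_neg_Tk]
end
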